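/- arXiv:2307.05965 — 3 statements merged into one kernel-verified Lean document; each statement's English description precedes it below -/
import Mathlib

section
/- Let ε ∈ (0,1), t ≥ 1 real, and let x < y be positive integers with y > (10/ε)^{1/ε}. Then there is a positive integer a such that, setting x̃ = y and ỹ = a·y + x, one has t ≤ (log ỹ)/(log x̃) < t + ε. -/
open Real

theorem targeting_lemma (ε t : ℝ) (hε : 0 < ε) (hε1 : ε < 1) (ht : 1 ≤ t)
    (x y : ℕ) (hx : 0 < x) (hxy : x < y) (hy : (y : ℝ) > (10 / ε) ^ (1 / ε)) :
    ∃ a : ℕ, 0 < a ∧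
      t ≤ Real.log ((a * y + x : ℕ) : ℝ) / Real.log (y : ℝ) ∧
      Real.log ((a * y + x : ℕ) : ℝ) / Real.log (y : ℝ) < t + ε := by
  have hy2 : 2 ≤ y := by omega
  have hY2 : (2 : ℝ) ≤ (y : ℝ) := by exact_mod_cast hy2
  have hY1 : (1 : ℝ) < (y : ℝ) := by linarith
  have hY0 : (0 : ℝ) < (y : ℝ) := by linarith
  have hlogY : 0 < Real.log (y : ℝ) := Real.log_pos hY1
  have ht1 : 0 ≤ t - 1 := by linarith
  have hpow_pos : (0 : ℝ) < (y : ℝ) ^ (t - 1) := Real.rpow_pos_of_pos hY0 _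
  have hpow1 : (1 : ℝ) ≤ (y : ℝ) ^ (t - 1) := Real.one_le_rpow hY1.le ht1
  set a : ℕ := ⌈(y : ℝ) ^ (t - 1)⌉₊ with hadef
  have haY : (y : ℝ) ^ (t - 1) ≤ (a : ℝ) := Nat.le_ceil _
  have haY' : (a : ℝ) < (y : ℝ) ^ (t - 1) + 1 := Nat.ceil_lt_add_one hpow_pos.le
  have hN : ((a * y + x : ℕ) : ℝ) = (a : ℝ) * (y : ℝ) + (x : ℝ) := by push_cast; ring
  have hYt : (y : ℝ) ^ (t - 1) * (y : ℝ) = (y : ℝ) ^ t := by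
    rw [← Real.rpow_add_one hY0.ne']; norm_num
  have hx0 : (0 : ℝ) ≤ (x : ℝ) := Nat.cast_nonneg _
  have hxY : (x : ℝ) < (y : ℝ) := by exact_mod_cast hxy
  have hlow : (y : ℝ) ^ t ≤ ((a * y + x : ℕ) : ℝ) := by
    rw [hN, ← hYt]
    nlinarith
  have hNpos : (0 : ℝ) < ((a * y + x : ℕ) : ℝ) :=
    lt_of_lt_of_le (Real.rpow_pos_of_pos hY0 t) hlow
  refine ⟨a, Nat.ceil_pos.mpr hpow_pos, ?_, ?_⟩
  · rw [le_div_iff₀ hlogY]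
    calc t * Real.log (y : ℝ) = Real.log ((y : ℝ) ^ t) := (Real.log_rpow hY0 t).symm
      _ ≤ _ := Real.log_le_log (Real.rpow_pos_of_pos hY0 t) hlow
  · rw [div_lt_iff₀ hlogY]
    have hYe : (3 : ℝ) < (y : ℝ) ^ ε := by
      have h1 : ((10 / ε) ^ (1 / ε) : ℝ) ^ ε < (y : ℝ) ^ ε :=
        Real.rpow_lt_rpow (Real.rpow_nonneg (by positivity) _) hy hε
      rw [← Real.rpow_mul (by positivity), one_div_mul_cancel hε.ne', Real.rpow_one] at h1
      have h2 : (10 : ℝ) < 10 / ε := by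
        rw [lt_div_iff₀ hε]; nlinarith
      linarith
    have hYtY : (y : ℝ) ≤ (y : ℝ) ^ t := by
      nth_rewrite 1 [← Real.rpow_one (y : ℝ)]
      exact Real.rpow_le_rpow_of_exponent_le hY1.le ht
    have hup : ((a * y + x : ℕ) : ℝ) < (y : ℝ) ^ (t + ε) := by
      have he : (y : ℝ) ^ (t + ε) = (y : ℝ) ^ ε * (y : ℝ) ^ t := by
        rw [← Real.rpow_add hY0]; ring_nf
      rw [he, hN]
      have h3 : (a : ℝ) * (y : ℝ) + (x : ℝ) < (y : ℝ) ^ t + 2 * (y : ℝ) := by nlinarith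
      nlinarith [Real.rpow_pos_of_pos hY0 t]
    calc Real.log ((a * y + x : ℕ) : ℝ) < Real.log ((y : ℝ) ^ (t + ε)) :=
          Real.log_lt_log hNpos hup
      _ = (t + ε) * Real.log (y : ℝ) := Real.log_rpow hY0 _
end

section
/- Let V = {(x,y) ∈ ℕ₊² : x < y} and define ℓ(x,y) = (log y)/(log x) if x > 1 and ℓ(x,y) = 1 if x = 1. For every (x,y) ∈ V and every t ∈ [1,∞], there exists a sequence (a_n)_{n≥1} of positive integers such that the trail (v_n) defined by v_0 = (x,y) and v_{n+1} = (y_n, a_{n+1}·y_n + x_n) where v_n = (x_n, y_n) satisfies ℓ(v_n) → t as n → ∞. -/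
open Filter Topology

/-- The weight function on vertices `(x, y)` with `1 ≤ x < y`. -/
noncomputable def ellFn (p : ℕ × ℕ) : ℝ :=
  if 1 < p.1 then Real.log (p.2 : ℝ) / Real.log (p.1 : ℝ) else 1

/-- The trail starting at `(x,y)` with multiplier `max 1 (b n z)` at step `n` from second
coordinate `z`. -/
def trailV (x y : ℕ) (b : ℕ → ℕ → ℕ) : ℕ → ℕ × ℕ := fun n =>
  Nat.rec (x, y) (fun m p => (p.2, max 1 (b m p.2) * p.2 + p.1)) n

lemma trailV_succ (x y : ℕ) (b : ℕ → ℕ → ℕ) (n : ℕ) :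
    trailV x y b (n + 1) =
      ((trailV x y b n).2,
        max 1 (b n (trailV x y b n).2) * (trailV x y b n).2 + (trailV x y b n).1) := rfl

lemma trailV_inv (x y : ℕ) (b : ℕ → ℕ → ℕ) (hx : 0 < x) (hxy : x < y) :
    ∀ n, 0 < (trailV x y b n).1 ∧ (trailV x y b n).1 < (trailV x y b n).2 := by
  intro n
  induction n with
  | zero => exact ⟨hx, hxy⟩
  | succ m ih =>
      rw [trailV_succ]
      refine ⟨lt_trans ih.1 ih.2, ?_⟩
      have h1 : 1 ≤ max 1 (b m (trailV x y b m).2) := le_max_left _ _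
      nlinarith [ih.1, ih.2]

lemma trailV_snd_ge (x y : ℕ) (b : ℕ → ℕ → ℕ) (hx : 0 < x) (hxy : x < y) :
    ∀ n, n + y ≤ (trailV x y b n).2 := by
  intro n
  induction n with
  | zero => simp [trailV]
  | succ m ih =>
      rw [trailV_succ]
      have h1 : 1 ≤ max 1 (b m (trailV x y b m).2) := le_max_left _ _
      have h2 := (trailV_inv x y b hx hxy m).1
      nlinarith

/-- Key estimate for the finite-target step. -/
lemma key_step (s : ℝ) (hs : 1 ≤ s) (z u : ℕ) (hz : 2 ≤ z) (hu : 0 < u) (huz : u < z) :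
    s ≤ Real.log (max 1 ⌈(z : ℝ) ^ (s - 1)⌉₊ * z + u : ℕ) / Real.log z ∧
      Real.log (max 1 ⌈(z : ℝ) ^ (s - 1)⌉₊ * z + u : ℕ) / Real.log z
        ≤ s + Real.log 3 / Real.log z := by
  have hz1 : (1 : ℝ) ≤ (z : ℝ) := by exact_mod_cast le_trans (by norm_num) hz
  have hz0 : (0 : ℝ) < (z : ℝ) := lt_of_lt_of_le one_pos hz1
  have hrp : (1 : ℝ) ≤ (z : ℝ) ^ (s - 1) := Real.one_le_rpow hz1 (by linarith)
  have hrp0 : (0 : ℝ) ≤ (z : ℝ) ^ (s - 1) := le_trans zero_le_one hrp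
  have hc1 : 1 ≤ ⌈(z : ℝ) ^ (s - 1)⌉₊ := Nat.one_le_ceil_iff.mpr (lt_of_lt_of_le one_pos hrp)
  have hmax : max 1 ⌈(z : ℝ) ^ (s - 1)⌉₊ = ⌈(z : ℝ) ^ (s - 1)⌉₊ := max_eq_right hc1
  set w : ℕ := max 1 ⌈(z : ℝ) ^ (s - 1)⌉₊ * z + u with hw
  have hcle : (z : ℝ) ^ (s - 1) ≤ (⌈(z : ℝ) ^ (s - 1)⌉₊ : ℝ) := Nat.le_ceil _
  have hclt : (⌈(z : ℝ) ^ (s - 1)⌉₊ : ℝ) < (z : ℝ) ^ (s - 1) + 1 := Nat.ceil_lt_add_one hrp0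
  have hzs : (z : ℝ) ^ s = (z : ℝ) ^ (s - 1) * z := by
    rw [← Real.rpow_add_one (ne_of_gt hz0) (s - 1)]; ring_nf
  have hwlow : (z : ℝ) ^ s ≤ (w : ℕ) := by
    push_cast [hw, hmax]
    nlinarith [hcle, hclt, (by exact_mod_cast hu : (0:ℝ) < (u:ℝ))]
  have hzzs : (z : ℝ) ≤ (z : ℝ) ^ s := by
    have := Real.rpow_le_rpow_of_exponent_le hz1 hs
    rwa [Real.rpow_one] at this
  have hwhigh : ((w : ℕ) : ℝ) ≤ 3 * (z : ℝ) ^ s := by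
    push_cast [hw, hmax]
    have huz' : (u : ℝ) < (z : ℝ) := by exact_mod_cast huz
    nlinarith [hclt, hzzs]
  have hws0 : (0 : ℝ) < (z : ℝ) ^ s := Real.rpow_pos_of_pos hz0 s
  have hwpos : (0 : ℝ) < ((w : ℕ) : ℝ) := lt_of_lt_of_le hws0 hwlow
  have hlogz : 0 < Real.log z := Real.log_pos (by exact_mod_cast hz)
  have hlow : s * Real.log z ≤ Real.log w := by
    have := Real.log_le_log hws0 hwlow
    rwa [Real.log_rpow hz0] at this
  have hhigh : Real.log w ≤ Real.log 3 + s * Real.log z := by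
    have := Real.log_le_log hwpos hwhigh
    rwa [Real.log_mul (by norm_num) (ne_of_gt hws0), Real.log_rpow hz0] at this
  constructor
  · rw [le_div_iff₀ hlogz]; exact hlow
  · rw [div_le_iff₀ hlogz]
    have : (s + Real.log 3 / Real.log z) * Real.log z = s * Real.log z + Real.log 3 := by
      field_simp
    rw [this]; linarith

theorem happy_trails (x y : ℕ) (hx : 0 < x) (hxy : x < y) (t : EReal) (ht : 1 ≤ t) :
    ∃ a : ℕ → ℕ, (∀ n, 0 < a n) ∧
      ∃ v : ℕ → ℕ × ℕ, v 0 = (x, y) ∧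
        (∀ n : ℕ, v (n + 1) = ((v n).2, a (n + 1) * (v n).2 + (v n).1)) ∧
        Filter.Tendsto (fun n => (ellFn (v n) : EReal)) Filter.atTop (nhds t) := by
  have h2y : 2 ≤ y := by omega
  induction t using EReal.rec with
  | bot => norm_num at ht; exact absurd ht (by exact_mod_cast EReal.coe_ne_bot 1)
  | coe s =>
      have hs : (1 : ℝ) ≤ s := by exact_mod_cast ht
      classical
      set b : ℕ → ℕ → ℕ := fun _ z => ⌈(z : ℝ) ^ (s - 1)⌉₊ with hb
      set V : ℕ → ℕ × ℕ := trailV x y b with hV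
      refine ⟨fun n => Nat.rec 1 (fun m _ => max 1 (b m (V m).2)) n, ?_, V, rfl,
        fun n => trailV_succ x y b n, ?_⟩
      · intro n
        cases n with
        | zero => exact one_pos
        | succ m => exact lt_of_lt_of_le one_pos (le_max_left _ _)
      · have hinv : ∀ n, 0 < (V n).1 ∧ (V n).1 < (V n).2 := trailV_inv x y b hx hxy
        have hge : ∀ n, n + y ≤ (V n).2 := trailV_snd_ge x y b hx hxy
        have hfst : ∀ n, 1 < (V (n + 1)).1 := by
          intro n
          have : (V (n + 1)).1 = (V n).2 := rfl
          rw [this]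
          have := hge n
          omega
        have hkey : ∀ n, s ≤ ellFn (V (n + 1)) ∧
            ellFn (V (n + 1)) ≤ s + Real.log 3 / Real.log (V n).2 := by
          intro n
          have hz : 2 ≤ (V n).2 := by have := hge n; omega
          have h := key_step s hs (V n).2 (V n).1 hz (hinv n).1 (hinv n).2
          have he : ellFn (V (n + 1)) =
              Real.log (max 1 ⌈((V n).2 : ℝ) ^ (s - 1)⌉₊ * (V n).2 + (V n).1 : ℕ)
                / Real.log (V n).2 := by
            rw [ellFn, if_pos (hfst n)]; rfl
          rw [he]; exact h
        rw [show ((s : ℝ) : EReal) = ((s : ℝ) : EReal) from rfl]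
        rw [EReal.tendsto_coe]
        rw [← tendsto_add_atTop_iff_nat 1]
        have hlogT : Tendsto (fun n => Real.log (V n).2) atTop atTop := by
          apply Real.tendsto_log_atTop.comp
          apply tendsto_atTop_mono (fun n => ?_) tendsto_natCast_atTop_atTop
          have := hge n
          exact_mod_cast le_trans (Nat.le_add_right n y) this
        have hupper : Tendsto (fun n => s + Real.log 3 / Real.log (V n).2) atTop (nhds (s + 0)) :=
          tendsto_const_nhds.add (Tendsto.div_atTop tendsto_const_nhds hlogT)
        rw [add_zero] at hupper
        exact tendsto_of_tendsto_of_tendsto_of_le_of_le tendsto_const_nhds hupper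
          (fun n => (hkey n).1) (fun n => (hkey n).2)
  | top =>
      set b : ℕ → ℕ → ℕ := fun n z => z ^ n with hb
      set V : ℕ → ℕ × ℕ := trailV x y b with hV
      refine ⟨fun n => Nat.rec 1 (fun m _ => max 1 (b m (V m).2)) n, ?_, V, rfl,
        fun n => trailV_succ x y b n, ?_⟩
      · intro n
        cases n with
        | zero => exact one_pos
        | succ m => exact lt_of_lt_of_le one_pos (le_max_left _ _)
      · have hinv : ∀ n, 0 < (V n).1 ∧ (V n).1 < (V n).2 := trailV_inv x y b hx hxy
        have hge : ∀ n, n + y ≤ (V n).2 := trailV_snd_ge x y b hx hxy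
        have hfst : ∀ n, 1 < (V (n + 1)).1 := by
          intro n
          have : (V (n + 1)).1 = (V n).2 := rfl
          rw [this]; have := hge n; omega
        have hkey : ∀ n : ℕ, ((n : ℝ) + 1) ≤ ellFn (V (n + 1)) := by
          intro n
          have hz : 2 ≤ (V n).2 := by have := hge n; omega
          have hz0 : (0 : ℝ) < ((V n).2 : ℝ) := by exact_mod_cast lt_of_lt_of_le two_pos hz
          have hlogz : 0 < Real.log (V n).2 := Real.log_pos (by exact_mod_cast hz)
          have hwge : ((V n).2 : ℕ) ^ (n + 1) ≤ (V (n + 1)).2 := by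
            have : (V (n + 1)).2 = max 1 ((V n).2 ^ n) * (V n).2 + (V n).1 := rfl
            rw [this, pow_succ]
            have : (V n).2 ^ n ≤ max 1 ((V n).2 ^ n) := le_max_right _ _
            nlinarith [(hinv n).1]
          have hwpos : (0 : ℝ) < ((V (n + 1)).2 : ℝ) := by
            have : 0 < (V (n + 1)).2 := lt_trans (hinv (n + 1)).1 (hinv (n + 1)).2
            exact_mod_cast this
          have hlog : ((n : ℝ) + 1) * Real.log (V n).2 ≤ Real.log (V (n + 1)).2 := by
            have h1 : (((V n).2 : ℝ)) ^ (n + 1) ≤ ((V (n + 1)).2 : ℝ) := by exact_mod_cast hwge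
            have := Real.log_le_log (pow_pos hz0 (n + 1)) h1
            rwa [Real.log_pow, Nat.cast_add, Nat.cast_one] at this
          have he : ellFn (V (n + 1)) = Real.log (V (n + 1)).2 / Real.log (V n).2 := by
            rw [ellFn, if_pos (hfst n)]; rfl
          rw [he, le_div_iff₀ hlogz]
          exact hlog
        rw [EReal.tendsto_nhds_top_iff_real]
        intro r
        obtain ⟨N, hN⟩ := exists_nat_gt r
        filter_upwards [eventually_ge_atTop (N + 1)] with m hm
        obtain ⟨k, rfl⟩ : ∃ k, m = k + 1 := ⟨m - 1, by omega⟩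
        have h1 : (r : ℝ) < (k : ℝ) + 1 := by
          have : (N : ℝ) ≤ (k : ℝ) + 1 := by exact_mod_cast (by omega : N ≤ k + 1)
          linarith
        have := lt_of_lt_of_le h1 (hkey k)
        exact_mod_cast this
end

section
/- For every irrational α, the set T(α) := {θ ≥ 1 : liminf_{q→∞} q^θ·‖qα‖ = 0} satisfies T(1/α) = T(α). -/
open Filter Topology

/-- Distance from a real number to the nearest integer. -/
noncomputable def nearInt (x : ℝ) : ℝ := |x - round x|

/-- The set `T(α)` of exponents `θ ≥ 1` with `liminf q^θ ‖qα‖ = 0`. -/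
noncomputable def tauSet (α : ℝ) : Set ℝ :=
  {θ : ℝ | 1 ≤ θ ∧ Filter.liminf (fun q : ℕ => (q : ℝ) ^ θ * nearInt (q * α)) Filter.atTop = 0}

lemma nearInt_nonneg (x : ℝ) : 0 ≤ nearInt x := abs_nonneg _

lemma nearInt_le (x : ℝ) (m : ℤ) : nearInt x ≤ |x - m| := round_le x m

/-- Characterization of `liminf = 0` for nonnegative sequences over ℝ. -/
lemma liminf_zero_iff (f : ℕ → ℝ) (hf : ∀ n, 0 ≤ f n) :
    Filter.liminf f Filter.atTop = 0 ↔
      Tendsto f atTop atTop ∨ ∀ ε > 0, ∃ᶠ n in atTop, f n < ε := by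
  rw [Filter.liminf_eq]
  set S := {a : ℝ | ∀ᶠ n in atTop, a ≤ f n} with hS
  have h0 : (0:ℝ) ∈ S := Filter.Eventually.of_forall hf
  by_cases hb : BddAbove S
  · constructor
    · intro h
      right
      intro ε hε
      by_contra hc
      rw [Filter.not_frequently] at hc
      have hεS : ε ∈ S := hc.mono (fun n hn => not_lt.mp hn)
      have : ε ≤ sSup S := le_csSup hb hεS
      rw [h] at this
      linarith
    · rintro (ht | hs)
      · exfalso
        obtain ⟨B, hB⟩ := hb
        have hmem : (B + 1) ∈ S := tendsto_atTop.mp ht (B + 1)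
        have := hB hmem
        linarith
      · apply le_antisymm
        · apply csSup_le ⟨0, h0⟩
          intro a ha
          by_contra hlt
          push_neg at hlt
          have := (hs a hlt).and_eventually ha
          obtain ⟨n, hn1, hn2⟩ := this.exists
          linarith
        · exact le_csSup hb h0
  · have hs0 : sSup S = 0 := Real.sSup_of_not_bddAbove hb
    rw [hs0]
    have htd : Tendsto f atTop atTop := by
      rw [tendsto_atTop]
      intro b
      obtain ⟨a, haS, hab⟩ := not_bddAbove_iff.mp hb b
      exact haS.mono (fun n hn => le_trans hab.le hn)
    simp [htd]

/-- Transfer lemma: frequent good approximations for `α` give them for `α⁻¹`. -/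
lemma transfer (α : ℝ) (hα : α ≠ 0) (θ : ℝ) (hθ : 1 ≤ θ) (c : ℝ) (hc : 0 < c)
    (h : ∃ᶠ q : ℕ in atTop, (q : ℝ) ^ θ * nearInt (q * α) < c) :
    ∃ᶠ p : ℕ in atTop, (p : ℝ) ^ θ * nearInt (p * α⁻¹) < (|α| + 1) ^ θ / |α| * c := by
  have hαpos : 0 < |α| := abs_pos.mpr hα
  rw [Filter.frequently_atTop] at h ⊢
  intro M
  set N : ℕ := max 1 ⌈((M : ℝ) + 1) / |α|⌉₊ with hN
  obtain ⟨q, hqN, hq⟩ := h N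
  have hq1 : 1 ≤ q := le_trans (le_max_left _ _) hqN
  have hqR : ((M : ℝ) + 1) / |α| ≤ (q : ℝ) := by
    calc ((M : ℝ) + 1) / |α| ≤ (⌈((M : ℝ) + 1) / |α|⌉₊ : ℝ) := Nat.le_ceil _
    _ ≤ (N : ℝ) := Nat.cast_le.mpr (le_max_right _ _)
    _ ≤ (q : ℝ) := Nat.cast_le.mpr hqN
  have hqα : (M : ℝ) + 1 ≤ (q : ℝ) * |α| := by
    rw [div_le_iff₀ hαpos] at hqR
    linarith
  set r : ℤ := round ((q : ℝ) * α) with hr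
  set p : ℕ := r.natAbs with hp
  have hpR : (p : ℝ) = |(r : ℝ)| := by
    rw [hp, Nat.cast_natAbs, Int.cast_abs]
  have hnear : nearInt ((q : ℝ) * α) = |(q : ℝ) * α - (r : ℝ)| := rfl
  have hhalf : |(q : ℝ) * α - (r : ℝ)| ≤ 1 / 2 := abs_sub_round _
  have habs : (q : ℝ) * |α| = |(q : ℝ) * α| := by
    rw [abs_mul, Nat.abs_cast]
  -- lower bound for p
  have hplow : (M : ℝ) ≤ (p : ℝ) := by
    rw [hpR]
    have : |(q : ℝ) * α| - |(q : ℝ) * α - (r : ℝ)| ≤ |(r : ℝ)| := by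
      have := abs_sub_abs_le_abs_sub ((q : ℝ) * α) (r : ℝ)
      linarith [abs_sub_comm ((q : ℝ) * α) ((r : ℝ))]
    nlinarith
  have hpM : M ≤ p := by exact_mod_cast hplow
  -- upper bound for p
  have hpup : (p : ℝ) ≤ (q : ℝ) * (|α| + 1) := by
    rw [hpR]
    have h1 : |(r : ℝ)| ≤ |(q : ℝ) * α| + |(q : ℝ) * α - (r : ℝ)| := by
      have := abs_sub_abs_le_abs_sub ((r : ℝ)) ((q : ℝ) * α)
      have h2 := abs_sub_comm ((r : ℝ)) ((q : ℝ) * α)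
      linarith [abs_abs_sub_abs_le_abs_sub ((r : ℝ)) ((q : ℝ) * α)]
    have hq1R : (1 : ℝ) ≤ (q : ℝ) := by exact_mod_cast hq1
    nlinarith
  -- nearInt bound for p * α⁻¹
  have hni : nearInt ((p : ℝ) * α⁻¹) ≤ nearInt ((q : ℝ) * α) / |α| := by
    have hni0 : nearInt ((p : ℝ) * α⁻¹) ≤ |(r : ℝ) * α⁻¹ - (q : ℝ)| := by
      rcases abs_cases ((r : ℝ)) with ⟨h1, _⟩ | ⟨h1, _⟩
      · rw [hpR, h1]
        have := nearInt_le ((r : ℝ) * α⁻¹) (q : ℤ)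
        rwa [Int.cast_natCast] at this
      · rw [hpR, h1, neg_mul]
        have := nearInt_le (-((r : ℝ) * α⁻¹)) (-(q : ℤ))
        have h2 : -((r : ℝ) * α⁻¹) - ((-(q : ℤ) : ℤ) : ℝ) = -((r : ℝ) * α⁻¹ - (q : ℝ)) := by
          push_cast; ring
        rwa [h2, abs_neg] at this
    calc nearInt ((p : ℝ) * α⁻¹) ≤ |(r : ℝ) * α⁻¹ - (q : ℝ)| := hni0
    _ = |((r : ℝ) - (q : ℝ) * α) * α⁻¹| := by
        congr 1
        field_simp
    _ = |(r : ℝ) - (q : ℝ) * α| / |α| := by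
        rw [abs_mul, abs_inv, div_eq_mul_inv]
    _ = nearInt ((q : ℝ) * α) / |α| := by
        rw [hnear, abs_sub_comm]
  refine ⟨p, hpM, ?_⟩
  have hpθ : (p : ℝ) ^ θ ≤ (q : ℝ) ^ θ * (|α| + 1) ^ θ := by
    rw [← Real.mul_rpow (by positivity) (by positivity)]
    exact Real.rpow_le_rpow (by positivity) hpup (by linarith)
  have hnn1 : (0 : ℝ) ≤ (p : ℝ) ^ θ := by positivity
  have hnn2 : (0 : ℝ) ≤ nearInt ((p : ℝ) * α⁻¹) := nearInt_nonneg _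
  calc (p : ℝ) ^ θ * nearInt ((p : ℝ) * α⁻¹)
      ≤ ((q : ℝ) ^ θ * (|α| + 1) ^ θ) * (nearInt ((q : ℝ) * α) / |α|) := by
        apply mul_le_mul hpθ hni hnn2 (by positivity)
    _ = (|α| + 1) ^ θ / |α| * ((q : ℝ) ^ θ * nearInt ((q : ℝ) * α)) := by ring
    _ < (|α| + 1) ^ θ / |α| * c := by
        apply mul_lt_mul_of_pos_left hq
        positivity

lemma tauSet_subset_inv (α : ℝ) (hα : α ≠ 0) : tauSet α ⊆ tauSet α⁻¹ := by
  intro θ hθmem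
  obtain ⟨hθ, hlim⟩ := hθmem
  have hαinv : α⁻¹ ≠ 0 := inv_ne_zero hα
  have hfnn : ∀ n : ℕ, 0 ≤ (n : ℝ) ^ θ * nearInt (n * α) := fun n => by
    have := nearInt_nonneg ((n : ℝ) * α); positivity
  have hgnn : ∀ n : ℕ, 0 ≤ (n : ℝ) ^ θ * nearInt (n * α⁻¹) := fun n => by
    have := nearInt_nonneg ((n : ℝ) * α⁻¹); positivity
  refine ⟨hθ, ?_⟩
  rw [liminf_zero_iff _ hgnn]
  rw [liminf_zero_iff _ hfnn] at hlim
  have hK : 0 < (|α| + 1) ^ θ / |α| := by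
    have : 0 < |α| := abs_pos.mpr hα
    positivity
  rcases hlim with ht | hs
  · -- tendsto case: show tendsto for α⁻¹ too
    left
    by_contra hc
    rw [tendsto_atTop] at hc
    push_neg at hc
    obtain ⟨b, hb⟩ := hc
    have hb' : ∃ᶠ n : ℕ in atTop, (n : ℝ) ^ θ * nearInt (n * α⁻¹) < max b 1 := by
      apply hb.mono
      intro n hn
      exact lt_of_lt_of_le hn (le_max_left _ _)
    have hmax : (0 : ℝ) < max b 1 := lt_of_lt_of_le one_pos (le_max_right _ _)
    have := transfer α⁻¹ hαinv θ hθ (max b 1) hmax hb'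
    rw [inv_inv] at this
    have hK' : (0 : ℝ) < (|α⁻¹| + 1) ^ θ / |α⁻¹| * max b 1 := by
      have : 0 < |α⁻¹| := abs_pos.mpr hαinv
      positivity
    have hev := (tendsto_atTop.mp ht) ((|α⁻¹| + 1) ^ θ / |α⁻¹| * max b 1)
    obtain ⟨n, hn1, hn2⟩ := (this.and_eventually hev).exists
    linarith
  · right
    intro ε hε
    have hc : (0 : ℝ) < ε / ((|α| + 1) ^ θ / |α|) := by positivity
    have := transfer α hα θ hθ _ hc (hs _ hc)
    apply this.mono
    intro n hn
    calc (n : ℝ) ^ θ * nearInt (n * α⁻¹) < (|α| + 1) ^ θ / |α| * (ε / ((|α| + 1) ^ θ / |α|)) := hn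
    _ = ε := by field_simp

theorem tauSet_inv (α : ℝ) (hα : Irrational α) : tauSet α⁻¹ = tauSet α := by
  have h0 : α ≠ 0 := hα.ne_zero
  have h0' : α⁻¹ ≠ 0 := inv_ne_zero h0
  apply le_antisymm
  · have := tauSet_subset_inv α⁻¹ h0'
    rwa [inv_inv] at this
  · exact tauSet_subset_inv α h0
end
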